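/- For every n ≥ 1 there is a bijection α between the set M(n) of self-dual Fishburn matrices of reduced size n and the set SM(n) of admissible super triangular matrices of size n, such that for every M ∈ M(n): the sum of the first row of α(M) equals the sum of the first row of M, and the sum of the center column of α(M) equals the sum of the diagonal cells of M. -/

import Mathlib

open Finset

/-- Square matrices of nonnegative integers of dimension `m` (0-based indexing). -/
abbrev Mat (m : ℕ) := Matrix (Fin m) (Fin m) ℕ

/-- Upper-triangular: all entries strictly below the main diagonal vanish. -/
def UT {m : ℕ} (M : Mat m) : Prop := ∀ i j : Fin m, (j : ℕ) < (i : ℕ) → M i j = 0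

/-- The size of a matrix: the sum of all its entries. -/
def msize {m : ℕ} (M : Mat m) : ℕ := ∑ i : Fin m, ∑ j : Fin m, M i j

/-- Row `i` contains a nonzero entry. -/
def rowNonzero {m : ℕ} (M : Mat m) (i : Fin m) : Prop := ∃ j, M i j ≠ 0

/-- Column `j` contains a nonzero entry. -/
def colNonzero {m : ℕ} (M : Mat m) (j : Fin m) : Prop := ∃ i, M i j ≠ 0

/-- The dual matrix: transpose along the antidiagonal, `M̄_{i,j} = M_{m+1-j,m+1-i}`. -/
def dual {m : ℕ} (M : Mat m) : Mat m := fun i j => M j.rev i.rev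

/-- A matrix is self-dual if it equals its dual. -/
def SelfDual {m : ℕ} (M : Mat m) : Prop := M = dual M

/-- A Fishburn matrix: upper-triangular, every row and every column contains a
nonzero entry. -/
def IsFishburn {m : ℕ} (M : Mat m) : Prop :=
  UT M ∧ (∀ i, rowNonzero M i) ∧ (∀ j, colNonzero M j)

/-- The reduced size: sum of the entries in NW-cells and diagonal cells
(in 1-based terms, cells `(i,j)` with `i + j ≤ m + 1`). -/
def reducedSize {m : ℕ} (M : Mat m) : ℕ :=
  ∑ i : Fin m, ∑ j : Fin m, if (i : ℕ) + (j : ℕ) + 1 ≤ m then M i j else 0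

/-- The reduced matrix: all entries in SE-cells are replaced by zeros. -/
def reduced {m : ℕ} (M : Mat m) : Mat m :=
  fun i j => if (i : ℕ) + (j : ℕ) + 1 ≤ m then M i j else 0

/-- A super triangular matrix: upper-triangular and all SE-cells are zero. -/
def SuperTri {m : ℕ} (M : Mat m) : Prop :=
  UT M ∧ ∀ i j : Fin m, m < (i : ℕ) + (j : ℕ) + 1 → M i j = 0

/-- The sum of the first row. -/
def firstRowSum {m : ℕ} (M : Mat m) : ℕ :=
  ∑ i : Fin m, ∑ j : Fin m, if (i : ℕ) = 0 then M i j else 0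

/-- The sum of the last column. -/
def lastColSum {m : ℕ} (M : Mat m) : ℕ :=
  ∑ i : Fin m, ∑ j : Fin m, if (j : ℕ) + 1 = m then M i j else 0

/-- The sum of the diagonal cells (cells `(i,j)` with `i + j = m + 1`, 1-based). -/
def diagSum {m : ℕ} (M : Mat m) : ℕ :=
  ∑ i : Fin m, ∑ j : Fin m, if (i : ℕ) + (j : ℕ) + 1 = m then M i j else 0

/-- The sum of the center column (column `k+1` of a matrix of dimension `2k+1`). -/
def centerColSum {m : ℕ} (M : Mat m) : ℕ :=
  ∑ i : Fin m, ∑ j : Fin m, if 2 * (j : ℕ) + 1 = m then M i j else 0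

/-- Square matrices of arbitrary dimension. -/
abbrev SMat := Σ m : ℕ, Mat m

/-- `M(n)`: self-dual Fishburn matrices of reduced size `n`. -/
def Mset (n : ℕ) : Set SMat :=
  {A | IsFishburn A.2 ∧ SelfDual A.2 ∧ reducedSize A.2 = n}

/-- `M(n,k)`: matrices of `M(n)` whose first row has sum `k`. -/
def Mset₂ (n k : ℕ) : Set SMat := {A ∈ Mset n | firstRowSum A.2 = k}

/-- `M(n,k,p)`: matrices of `M(n,k)` whose diagonal cells have sum `p`. -/
def Mset₃ (n k p : ℕ) : Set SMat := {A ∈ Mset₂ n k | diagSum A.2 = p}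

/-- `EM(n,k)`: matrices of `M(n,k)` of even dimension. -/
def EMset (n k : ℕ) : Set SMat := {A ∈ Mset₂ n k | Even A.1}

/-- `OM(n,k)`: matrices of `M(n,k)` of odd dimension. -/
def OMset (n k : ℕ) : Set SMat := {A ∈ Mset₂ n k | Odd A.1}

/-- `RM(n)`: row-Fishburn matrices of size `n`. -/
def RMset (n : ℕ) : Set SMat :=
  {A | UT A.2 ∧ (∀ i, rowNonzero A.2 i) ∧ msize A.2 = n}

/-- `RM(n,k)`: row-Fishburn matrices of size `n` whose last column has sum `k`. -/
def RMset₂ (n k : ℕ) : Set SMat := {A ∈ RMset n | lastColSum A.2 = k}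

/-- `RM(n,k,p)`: matrices of `RM(n,k)` whose first row has sum `p`. -/
def RMset₃ (n k p : ℕ) : Set SMat := {A ∈ RMset₂ n k | firstRowSum A.2 = p}

/-- `SM(n)`: super triangular matrices of size `n` and dimension `2k+1` such that
(a) each of the first `k` columns contains a nonzero entry, and
(b) for `1 ≤ i ≤ k`, row `k+1-i` or column `k+1+i` contains a nonzero entry
(0-based: for `a < k`, row `a` or column `b` with `a + b = 2k` is nonzero). -/
def SMset (n : ℕ) : Set SMat :=
  {A | SuperTri A.2 ∧ msize A.2 = n ∧
    ∃ k : ℕ, A.1 = 2 * k + 1 ∧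
      (∀ j : Fin A.1, (j : ℕ) < k → colNonzero A.2 j) ∧
      (∀ a b : Fin A.1, (a : ℕ) < k → (a : ℕ) + (b : ℕ) = 2 * k →
        rowNonzero A.2 a ∨ colNonzero A.2 b)}

/-- `SM(n,k,p)`: matrices of `SM(n)` whose first row has sum `k` and whose center
column has sum `p`. -/
def SMset₃ (n k p : ℕ) : Set SMat :=
  {A ∈ SMset n | firstRowSum A.2 = k ∧ centerColSum A.2 = p}

/-- `B(n)`: upper-triangular matrices of size `n` in which every row except
possibly the first contains a nonzero entry. -/
def Bset (n : ℕ) : Set SMat :=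
  {A | UT A.2 ∧ (∀ i : Fin A.1, (i : ℕ) ≠ 0 → rowNonzero A.2 i) ∧ msize A.2 = n}

/-- `B(n,k,p)`: matrices of `B(n)` whose first row has sum `p` and whose last
column has sum `k`. -/
def Bset₃ (n k p : ℕ) : Set SMat :=
  {A ∈ Bset n | firstRowSum A.2 = p ∧ lastColSum A.2 = k}

namespace Stmt2Aux

/-- Extension of a matrix to a total function on ℕ × ℕ (zero outside). -/
def extM {m : ℕ} (M : Mat m) : ℕ → ℕ → ℕ := fun x y =>
  if h : x < m ∧ y < m then M ⟨x, h.1⟩ ⟨y, h.2⟩ else 0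

def toMat (m : ℕ) (f : ℕ → ℕ → ℕ) : Mat m := fun i j => f i j

lemma extM_apply {m} (M : Mat m) (i j : Fin m) : extM M i j = M i j := by
  simp [extM, i.isLt, j.isLt]

lemma extM_toMat (m : ℕ) (f : ℕ → ℕ → ℕ) (x y : ℕ) :
    extM (toMat m f) x y = if x < m ∧ y < m then f x y else 0 := by
  unfold extM toMat; split_ifs <;> rfl

lemma extM_out {m} (M : Mat m) {x y : ℕ} (h : m ≤ x ∨ m ≤ y) : extM M x y = 0 := by
  unfold extM; rw [dif_neg]; omega

/-- core maps -/
def red (m : ℕ) (f : ℕ → ℕ → ℕ) : ℕ → ℕ → ℕ := fun x y =>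
  if x + y + 1 ≤ m then f x y else 0

def gam (k : ℕ) (f : ℕ → ℕ → ℕ) : ℕ → ℕ → ℕ := fun x y =>
  if y = k then f x (2*k - x) else if x + y = 2*k then f x k else f x y

def emb (k : ℕ) (f : ℕ → ℕ → ℕ) : ℕ → ℕ → ℕ := fun x y =>
  if y < k then f x y else if y = k then 0 else f x (y-1)

def strip (k : ℕ) (f : ℕ → ℕ → ℕ) : ℕ → ℕ → ℕ := fun x y =>
  f x (if y < k then y else y+1)

def unf (m : ℕ) (f : ℕ → ℕ → ℕ) : ℕ → ℕ → ℕ := fun x y =>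
  if x + y + 1 ≤ m then f x y else f (m-1-y) (m-1-x)

lemma gam_center (k : ℕ) (f : ℕ → ℕ → ℕ) (x : ℕ) : gam k f x k = f x (2*k - x) := by
  simp [gam]

lemma gam_anti (k : ℕ) (f : ℕ → ℕ → ℕ) {x y : ℕ} (h : x + y = 2*k) (hy : y ≠ k) :
    gam k f x y = f x k := by
  simp [gam, hy, h]

lemma gam_fix (k : ℕ) (f : ℕ → ℕ → ℕ) {x y : ℕ} (hy : y ≠ k) (h : x + y ≠ 2*k) :
    gam k f x y = f x y := by
  simp [gam, hy, h]

lemma gam_gam (k : ℕ) (f : ℕ → ℕ → ℕ) {x : ℕ} (hx : x ≤ 2*k) (y : ℕ) :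
    gam k (gam k f) x y = f x y := by
  rcases eq_or_ne y k with h | hy
  · rw [h, gam_center]
    rcases eq_or_ne (2*k - x) k with h2 | h2
    · rw [h2, gam_center, h2]
    · rw [gam_anti k f (by omega) h2]
  · rcases eq_or_ne (x + y) (2*k) with h | h
    · rw [gam_anti k (gam k f) h hy, gam_center, show 2*k-x = y by omega]
    · rw [gam_fix k (gam k f) hy h, gam_fix k f hy h]

lemma sum_swap_row (F : ℕ → ℕ) (N a b : ℕ) (ha : a < N) (hb : b < N) :
    (∑ y ∈ Finset.range N, if y = a then F b else if y = b then F a else F y)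
      = ∑ y ∈ Finset.range N, F y := by
  rcases eq_or_ne a b with rfl | hab
  · apply Finset.sum_congr rfl; intro y _
    split_ifs with h1 h2 <;> simp_all
  · apply Finset.sum_nbij' (i := fun y => if y = a then b else if y = b then a else y)
      (j := fun y => if y = a then b else if y = b then a else y) <;>
      intro y hy <;> simp only [Finset.mem_range] at * <;> split_ifs <;>
      first | omega | rfl | simp_all

lemma gam_row_sum (k : ℕ) (f : ℕ → ℕ → ℕ) {x : ℕ} (hx : x ≤ 2*k) :
    ∑ y ∈ Finset.range (2*k+1), gam k f x y = ∑ y ∈ Finset.range (2*k+1), f x y := by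
  have h1 : ∀ y ∈ Finset.range (2*k+1), gam k f x y =
      (if y = k then f x (2*k-x) else if y = 2*k - x then f x k else f x y) := by
    intro y hy
    simp only [Finset.mem_range] at hy
    rcases eq_or_ne y k with h | h
    · rw [h, gam_center, if_pos rfl]
    · rcases eq_or_ne y (2*k - x) with rfl | h2
      · rw [gam_anti k f (by omega) h, if_neg h, if_pos rfl]
      · rw [gam_fix k f h (by omega), if_neg h, if_neg h2]
  rw [Finset.sum_congr rfl h1]
  exact sum_swap_row (f x) (2*k+1) k (2*k - x) (by omega) (by omega)

end Stmt2Aux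
namespace Stmt2Aux

lemma finsum_eq (m : ℕ) (F : ℕ → ℕ → ℕ) :
    (∑ i : Fin m, ∑ j : Fin m, F i j) = ∑ x ∈ Finset.range m, ∑ y ∈ Finset.range m, F x y := by
  rw [← Fin.sum_univ_eq_sum_range (fun x => ∑ y ∈ Finset.range m, F x y) m]
  exact Finset.sum_congr rfl fun i _ => Fin.sum_univ_eq_sum_range (fun y => F i y) m

lemma msize_eq {m : ℕ} (M : Mat m) :
    msize M = ∑ x ∈ Finset.range m, ∑ y ∈ Finset.range m, extM M x y := by
  rw [← finsum_eq]
  exact Finset.sum_congr rfl fun i _ => Finset.sum_congr rfl fun j _ => (extM_apply M i j).symm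

lemma reducedSize_eq {m : ℕ} (M : Mat m) :
    reducedSize M = ∑ x ∈ Finset.range m, ∑ y ∈ Finset.range m,
      (if x + y + 1 ≤ m then extM M x y else 0) := by
  rw [← finsum_eq]
  refine Finset.sum_congr rfl fun i _ => Finset.sum_congr rfl fun j _ => ?_
  rw [extM_apply]

lemma firstRowSum_eq {m : ℕ} (M : Mat m) :
    firstRowSum M = ∑ y ∈ Finset.range m, extM M 0 y := by
  have : firstRowSum M = ∑ x ∈ Finset.range m, ∑ y ∈ Finset.range m,
      (if x = 0 then extM M x y else 0) := by
    rw [← finsum_eq]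
    refine Finset.sum_congr rfl fun i _ => Finset.sum_congr rfl fun j _ => ?_
    rw [extM_apply]
  rw [this]
  have : ∀ x ∈ Finset.range m, (∑ y ∈ Finset.range m, if x = 0 then extM M x y else 0)
      = if x = 0 then (∑ y ∈ Finset.range m, extM M 0 y) else 0 := by
    intro x _; split_ifs with h <;> simp [h]
  rw [Finset.sum_congr rfl this, Finset.sum_ite_eq' (Finset.range m) 0]
  rcases Nat.eq_zero_or_pos m with rfl | hm
  · simp
  · rw [if_pos (Finset.mem_range.mpr hm)]

lemma diagSum_eq {m : ℕ} (M : Mat m) :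
    diagSum M = ∑ x ∈ Finset.range m, extM M x (m - 1 - x) := by
  have : diagSum M = ∑ x ∈ Finset.range m, ∑ y ∈ Finset.range m,
      (if x + y + 1 = m then extM M x y else 0) := by
    rw [← finsum_eq]
    refine Finset.sum_congr rfl fun i _ => Finset.sum_congr rfl fun j _ => ?_
    rw [extM_apply]
  rw [this]
  refine Finset.sum_congr rfl fun x hx => ?_
  simp only [Finset.mem_range] at hx
  have h1 : ∀ y ∈ Finset.range m, (if x + y + 1 = m then extM M x y else 0)
      = if y = m - 1 - x then extM M x y else 0 := by
    intro y hy; simp only [Finset.mem_range] at hy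
    refine if_congr (by omega) rfl rfl
  rw [Finset.sum_congr rfl h1, Finset.sum_ite_eq' (Finset.range m) (m-1-x)]
  rw [if_pos (Finset.mem_range.mpr (by omega))]

lemma centerColSum_eq {k : ℕ} (M : Mat (2*k+1)) :
    centerColSum M = ∑ x ∈ Finset.range (2*k+1), extM M x k := by
  have : centerColSum M = ∑ x ∈ Finset.range (2*k+1), ∑ y ∈ Finset.range (2*k+1),
      (if y = k then extM M x y else 0) := by
    rw [← finsum_eq]
    refine Finset.sum_congr rfl fun i _ => Finset.sum_congr rfl fun j _ => ?_
    rw [extM_apply]; exact if_congr (by omega) rfl rfl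
  rw [this]
  refine Finset.sum_congr rfl fun x hx => ?_
  rw [Finset.sum_ite_eq' (Finset.range (2*k+1)) k, if_pos (Finset.mem_range.mpr (by omega))]

/-- extended UT -/
lemma ext_UT {m : ℕ} {M : Mat m} (h : UT M) {x y : ℕ} (hxy : y < x) : extM M x y = 0 := by
  by_cases hr : x < m ∧ y < m
  · rw [extM, dif_pos hr]; exact h _ _ hxy
  · exact extM_out M (by omega)

lemma ext_SD {m : ℕ} {M : Mat m} (h : SelfDual M) {x y : ℕ} (hx : x < m) (hy : y < m) :
    extM M x y = extM M (m - 1 - y) (m - 1 - x) := by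
  have h1 := congrFun (congrFun h ⟨x, hx⟩) ⟨y, hy⟩
  have h4 : dual M ⟨x, hx⟩ ⟨y, hy⟩ = M (Fin.rev ⟨y, hy⟩) (Fin.rev ⟨x, hx⟩) := rfl
  calc extM M x y = M ⟨x, hx⟩ ⟨y, hy⟩ := extM_apply M ⟨x, hx⟩ ⟨y, hy⟩
    _ = M (Fin.rev ⟨y, hy⟩) (Fin.rev ⟨x, hx⟩) := h1.trans h4
    _ = extM M (Fin.rev (⟨y, hy⟩ : Fin m)).val (Fin.rev (⟨x, hx⟩ : Fin m)).val :=
        (extM_apply M _ _).symm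
    _ = extM M (m - 1 - y) (m - 1 - x) := by
        rw [Fin.val_rev, Fin.val_rev, Fin.val_mk, Fin.val_mk,
          show m - (y+1) = m - 1 - y from by omega, show m - (x+1) = m - 1 - x from by omega]

lemma ext_SE {m : ℕ} {M : Mat m} (h : SuperTri M) {x y : ℕ} (hxy : m ≤ x + y) :
    extM M x y = 0 := by
  by_cases hr : x < m ∧ y < m
  · rw [extM, dif_pos hr]
    exact h.2 ⟨x, hr.1⟩ ⟨y, hr.2⟩ (by simp only [Fin.val_mk]; omega)
  · exact extM_out M (by omega)

/-- building predicates on toMat -/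
lemma UT_toMat {m : ℕ} {f : ℕ → ℕ → ℕ} (h : ∀ x y : ℕ, x < m → y < m → y < x → f x y = 0) :
    UT (toMat m f) := fun i j hji => h i j i.isLt j.isLt hji

lemma SuperTri_toMat {m : ℕ} {f : ℕ → ℕ → ℕ}
    (h1 : ∀ x y : ℕ, x < m → y < m → y < x → f x y = 0)
    (h2 : ∀ x y : ℕ, x < m → y < m → m < x + y + 1 → f x y = 0) :
    SuperTri (toMat m f) :=
  ⟨UT_toMat h1, fun i j hij => h2 i j i.isLt j.isLt hij⟩

lemma SelfDual_toMat {m : ℕ} {f : ℕ → ℕ → ℕ}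
    (h : ∀ x y : ℕ, x < m → y < m → f x y = f (m - 1 - y) (m - 1 - x)) :
    SelfDual (toMat m f) := by
  funext i j
  show f i j = f (Fin.rev j) (Fin.rev i)
  rw [h i j i.isLt j.isLt]
  congr 1 <;> rw [Fin.val_rev] <;> omega

/-- row sums for emb and strip -/
lemma emb_row_sum (k : ℕ) (f : ℕ → ℕ → ℕ) (x : ℕ) :
    ∑ y ∈ Finset.range (2*k+1), emb k f x y = ∑ y ∈ Finset.range (2*k), f x y := by
  have e1 : Finset.range (2*k+1) = Finset.Ico 0 (2*k+1) := by rw [Finset.range_eq_Ico]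
  have e2 : Finset.range (2*k) = Finset.Ico 0 (2*k) := by rw [Finset.range_eq_Ico]
  rw [e1, e2, ← Finset.sum_Ico_consecutive _ (by omega : 0 ≤ k) (by omega : k ≤ 2*k+1),
    ← Finset.sum_Ico_consecutive _ (by omega : 0 ≤ k) (by omega : k ≤ 2*k)]
  congr 1
  · refine Finset.sum_congr rfl fun y hy => ?_
    simp only [Finset.mem_Ico] at hy
    simp [emb, hy.2]
  · rw [show Finset.Ico k (2*k+1) = Finset.Ico k (k+1) ∪ Finset.Ico (k+1) (2*k+1) from
      (Finset.Ico_union_Ico_eq_Ico (by omega) (by omega)).symm]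
    rw [Finset.sum_union (by
      simp only [Finset.disjoint_left, Finset.mem_Ico]; omega)]
    have : ∑ y ∈ Finset.Ico k (k+1), emb k f x y = 0 := by
      simp [emb]
    rw [this, zero_add]
    rw [Finset.sum_Ico_eq_sum_range, Finset.sum_Ico_eq_sum_range,
      show (2*k+1) - (k+1) = 2*k - k from by omega]
    refine Finset.sum_congr rfl fun y hy => ?_
    simp only [Finset.mem_range] at hy
    simp only [emb]
    rw [if_neg (by omega), if_neg (by omega)]
    congr 1; omega

lemma strip_row_sum (k : ℕ) (f : ℕ → ℕ → ℕ) (x : ℕ) (hc : f x k = 0) :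
    ∑ y ∈ Finset.range (2*k), strip k f x y = ∑ y ∈ Finset.range (2*k+1), f x y := by
  have h := emb_row_sum k (strip k f) x
  have : ∀ y ∈ Finset.range (2*k+1), emb k (strip k f) x y = f x y := by
    intro y hy; simp only [Finset.mem_range] at hy
    simp only [emb, strip]
    split_ifs with h1 h2 h3 <;>
      first | rfl | (exfalso; omega) | (congr 1; omega) | (rw [h2]; exact hc.symm)
  rw [← Finset.sum_congr rfl this, h]

lemma strip_emb (k : ℕ) (f : ℕ → ℕ → ℕ) (x y : ℕ) : strip k (emb k f) x y = f x y := by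
  simp only [strip, emb]
  split_ifs <;> first | rfl | (exfalso; omega) | (congr 1; omega)

lemma emb_strip (k : ℕ) (f : ℕ → ℕ → ℕ) (x y : ℕ) (hc : f x k = 0) :
    emb k (strip k f) x y = f x y := by
  simp only [emb, strip]
  split_ifs with h1 h2 h3 <;>
    first | rfl | (exfalso; omega) | (congr 1; omega) | (rw [h2]; exact hc.symm)

/-- unf is self-dual -/
lemma unf_SD (m : ℕ) (f : ℕ → ℕ → ℕ) {x y : ℕ} (hx : x < m) (hy : y < m) :
    unf m f x y = unf m f (m - 1 - y) (m - 1 - x) := by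
  simp only [unf]
  rcases lt_trichotomy (x + y + 1) m with h | h | h
  · rw [if_pos (by omega), if_neg (by omega)]
    congr 1 <;> omega
  · rw [if_pos (by omega), if_pos (by omega)]
    congr 1 <;> omega
  · rw [if_neg (by omega), if_pos (by omega)]

lemma unf_UT (m : ℕ) (f : ℕ → ℕ → ℕ)
    (h1 : ∀ x y : ℕ, y < x → f x y = 0) {x y : ℕ} (hx : x < m) (hy : y < m) (hxy : y < x) :
    unf m f x y = 0 := by
  simp only [unf]
  split_ifs with h
  · exact h1 x y hxy
  · exact h1 _ _ (by omega)

end Stmt2Aux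
namespace Stmt2Aux

/-- The bijection. -/
def alphaF : SMat → SMat := fun A =>
  if Even A.1
  then ⟨2*(A.1/2)+1, toMat (2*(A.1/2)+1) (gam (A.1/2) (emb (A.1/2) (red A.1 (extM A.2))))⟩
  else ⟨2*(A.1/2)+1, toMat (2*(A.1/2)+1) (gam (A.1/2) (red A.1 (extM A.2)))⟩

/-- Its inverse. -/
def betaF : SMat → SMat := fun A =>
  if (∑ x ∈ Finset.range (2*(A.1/2)+1), gam (A.1/2) (extM A.2) x (A.1/2)) ≠ 0
  then ⟨2*(A.1/2)+1, toMat (2*(A.1/2)+1) (unf (2*(A.1/2)+1) (gam (A.1/2) (extM A.2)))⟩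
  else ⟨2*(A.1/2), toMat (2*(A.1/2)) (unf (2*(A.1/2)) (strip (A.1/2) (gam (A.1/2) (extM A.2))))⟩

lemma sigma_congr {m1 m2 : ℕ} {f g : ℕ → ℕ → ℕ} (h : m1 = m2) (hf : f = g) :
    (⟨m1, toMat m1 f⟩ : SMat) = ⟨m2, toMat m2 g⟩ := by subst h; subst hf; rfl

lemma alphaF_odd (k : ℕ) (N : Mat (2*k+1)) :
    alphaF ⟨2*k+1, N⟩ = ⟨2*k+1, toMat (2*k+1) (gam k (red (2*k+1) (extM N)))⟩ := by
  have h : (2*k+1)/2 = k := by omega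
  show (if Even (2*k+1) then _ else _) = _
  rw [if_neg (by rw [Nat.even_iff]; omega)]
  exact sigma_congr (show 2*((2*k+1)/2)+1 = 2*k+1 by omega)
    (show gam ((2*k+1)/2) (red (2*k+1) (extM N)) = _ by rw [h])

lemma alphaF_even (k : ℕ) (N : Mat (2*k)) :
    alphaF ⟨2*k, N⟩ = ⟨2*k+1, toMat (2*k+1) (gam k (emb k (red (2*k) (extM N))))⟩ := by
  have h : (2*k)/2 = k := by omega
  show (if Even (2*k) then _ else _) = _
  rw [if_pos ⟨k, by ring⟩]
  exact sigma_congr (show 2*((2*k)/2)+1 = 2*k+1 by omega)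
    (show gam ((2*k)/2) (emb ((2*k)/2) (red (2*k) (extM N))) = _ by rw [h])

lemma betaF_apply (k : ℕ) (N : Mat (2*k+1)) :
    betaF ⟨2*k+1, N⟩ = if (∑ x ∈ Finset.range (2*k+1), gam k (extM N) x k) ≠ 0
      then ⟨2*k+1, toMat (2*k+1) (unf (2*k+1) (gam k (extM N)))⟩
      else ⟨2*k, toMat (2*k) (unf (2*k) (strip k (gam k (extM N))))⟩ := by
  have h : (2*k+1)/2 = k := by omega
  show (if ((∑ x ∈ Finset.range (2*((2*k+1)/2)+1), gam ((2*k+1)/2) (extM N) x ((2*k+1)/2)) ≠ 0)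
    then _ else _) = _
  by_cases hC : (∑ x ∈ Finset.range (2*k+1), gam k (extM N) x k) ≠ 0
  · rw [if_pos (show (∑ x ∈ Finset.range (2*((2*k+1)/2)+1),
        gam ((2*k+1)/2) (extM N) x ((2*k+1)/2)) ≠ 0 by rw [h]; exact hC), if_pos hC]
    exact sigma_congr (show 2*((2*k+1)/2)+1 = 2*k+1 by omega)
      (show unf (2*((2*k+1)/2)+1) (gam ((2*k+1)/2) (extM N)) = _ by rw [h])
  · rw [if_neg (show ¬(∑ x ∈ Finset.range (2*((2*k+1)/2)+1),
        gam ((2*k+1)/2) (extM N) x ((2*k+1)/2)) ≠ 0 by rw [h]; exact hC), if_neg hC]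
    exact sigma_congr (show 2*((2*k+1)/2) = 2*k by omega)
      (show unf (2*((2*k+1)/2)) (strip ((2*k+1)/2) (gam ((2*k+1)/2) (extM N))) = _ by rw [h])

/-- nonzero transfers -/
lemma row_ext {m : ℕ} {M : Mat m} {i : Fin m} (h : rowNonzero M i) :
    ∃ y, y < m ∧ extM M i y ≠ 0 := by
  obtain ⟨j, hj⟩ := h
  exact ⟨j, j.isLt, by rw [extM_apply]; exact hj⟩

lemma col_ext {m : ℕ} {M : Mat m} {j : Fin m} (h : colNonzero M j) :
    ∃ x, x < m ∧ extM M x j ≠ 0 := by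
  obtain ⟨i, hi⟩ := h
  exact ⟨i, i.isLt, by rw [extM_apply]; exact hi⟩

lemma rowNonzero_of {m : ℕ} (f : ℕ → ℕ → ℕ) (i : Fin m) {y : ℕ} (hy : y < m)
    (h : f (i : ℕ) y ≠ 0) : rowNonzero (toMat m f) i := ⟨⟨y, hy⟩, h⟩

lemma colNonzero_of {m : ℕ} (f : ℕ → ℕ → ℕ) (j : Fin m) {x : ℕ} (hx : x < m)
    (h : f x (j : ℕ) ≠ 0) : colNonzero (toMat m f) j := ⟨⟨x, hx⟩, h⟩

lemma rowNonzero_of_SD {m : ℕ} {M : Mat m} (h : SelfDual M) {i : Fin m}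
    (hc : colNonzero M i.rev) : rowNonzero M i := by
  obtain ⟨x, hx⟩ := hc
  refine ⟨x.rev, ?_⟩
  have h1 := congrFun (congrFun h i) x.rev
  rw [h1]
  show M x.rev.rev i.rev ≠ 0
  rwa [Fin.rev_rev]

-- structural lemmas about `E = gam k (extM A)` for `A` super-triangular
variable {k : ℕ} {A : Mat (2*k+1)}

lemma E_UT (hA : SuperTri A) : ∀ x y : ℕ, y < x → gam k (extM A) x y = 0 := by
  intro x y h
  rcases eq_or_ne y k with rfl | hyk
  · rw [gam_center]; exact ext_UT hA.1 (by omega)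
  · rcases eq_or_ne (x+y) (2*k) with hs2 | hs2
    · rw [gam_anti _ _ hs2 hyk]; exact ext_UT hA.1 (by omega)
    · rw [gam_fix _ _ hyk hs2]; exact ext_UT hA.1 h

lemma E_SE (hA : SuperTri A) : ∀ x y : ℕ, 2*k+1 ≤ x + y → gam k (extM A) x y = 0 := by
  intro x y h
  rcases eq_or_ne y k with rfl | hyk
  · rw [gam_center]; exact ext_UT hA.1 (by omega)
  · rcases eq_or_ne (x+y) (2*k) with hs2 | hs2
    · omega
    · rw [gam_fix _ _ hyk hs2]; exact ext_SE hA (by omega)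

lemma E_center (hs : ∑ x ∈ Finset.range (2*k+1), gam k (extM A) x k = 0) :
    ∀ x : ℕ, gam k (extM A) x k = 0 := by
  intro x
  by_cases hx : x < 2*k+1
  · exact Finset.sum_eq_zero_iff.mp hs x (Finset.mem_range.mpr hx)
  · rw [gam_center]; exact extM_out A (by omega)

lemma E_row2k (hA : SuperTri A) (hc : ∀ x : ℕ, gam k (extM A) x k = 0) :
    ∀ y : ℕ, gam k (extM A) (2*k) y = 0 := by
  intro y
  rcases eq_or_ne y k with h | hyk
  · rw [h]; exact hc (2*k)
  · rcases eq_or_ne (2*k+y) (2*k) with hs2 | hs2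
    · rw [gam_anti _ _ hs2 hyk]
      exact ext_UT hA.1 (by omega)
    · rw [gam_fix _ _ hyk hs2]
      exact ext_SE hA (by omega)

lemma R_UT (hA : SuperTri A) : ∀ x y : ℕ, y < x → strip k (gam k (extM A)) x y = 0 := by
  intro x y h
  rw [strip]
  split_ifs with h1
  · exact E_UT hA x y h
  · rcases eq_or_ne (y+1) x with h2 | h2
    · rw [← h2]; exact E_SE hA _ _ (by omega)
    · exact E_UT hA x (y+1) (by omega)

lemma R_SE (hA : SuperTri A) : ∀ x y : ℕ, 2*k ≤ x + y → strip k (gam k (extM A)) x y = 0 := by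
  intro x y h
  rw [strip]
  split_ifs with h1
  · rcases eq_or_ne (x+y) (2*k) with h2 | h2
    · rw [gam_anti _ _ h2 (by omega)]
      exact ext_UT hA.1 (by omega)
    · exact E_SE hA x y (by omega)
  · exact E_SE hA x (y+1) (by omega)

/-- stat lemmas for toMat -/
lemma msize_toMat (m : ℕ) (f : ℕ → ℕ → ℕ) :
    msize (toMat m f) = ∑ x ∈ Finset.range m, ∑ y ∈ Finset.range m, f x y := by
  rw [msize_eq]
  refine Finset.sum_congr rfl fun x hx => Finset.sum_congr rfl fun y hy => ?_
  simp only [Finset.mem_range] at hx hy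
  rw [extM_toMat, if_pos (show x < m ∧ y < m from ⟨hx, hy⟩)]

lemma firstRowSum_toMat (m : ℕ) (f : ℕ → ℕ → ℕ) :
    firstRowSum (toMat m f) = ∑ y ∈ Finset.range m, f 0 y := by
  rw [firstRowSum_eq]
  refine Finset.sum_congr rfl fun y hy => ?_
  simp only [Finset.mem_range] at hy
  rw [extM_toMat, if_pos ⟨by omega, hy⟩]

lemma centerColSum_toMat (k : ℕ) (f : ℕ → ℕ → ℕ) :
    centerColSum (toMat (2*k+1) f) = ∑ x ∈ Finset.range (2*k+1), f x k := by
  rw [centerColSum_eq]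
  refine Finset.sum_congr rfl fun x hx => ?_
  simp only [Finset.mem_range] at hx
  rw [extM_toMat, if_pos ⟨hx, by omega⟩]

lemma reducedSize_toMat (m : ℕ) (f : ℕ → ℕ → ℕ) :
    reducedSize (toMat m f) = ∑ x ∈ Finset.range m, ∑ y ∈ Finset.range m,
      (if x + y + 1 ≤ m then f x y else 0) := by
  rw [reducedSize_eq]
  refine Finset.sum_congr rfl fun x hx => Finset.sum_congr rfl fun y hy => ?_
  simp only [Finset.mem_range] at hx hy
  rw [extM_toMat, if_pos (show x < m ∧ y < m from ⟨hx, hy⟩)]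

end Stmt2Aux
namespace Stmt2Aux

lemma red_pos {m x y : ℕ} (f : ℕ → ℕ → ℕ) (h : x + y + 1 ≤ m) : red m f x y = f x y := if_pos h
lemma red_neg {m x y : ℕ} (f : ℕ → ℕ → ℕ) (h : ¬(x + y + 1 ≤ m)) : red m f x y = 0 := if_neg h
lemma emb_lt {k y : ℕ} (f : ℕ → ℕ → ℕ) (x : ℕ) (h : y < k) : emb k f x y = f x y := if_pos h
lemma emb_center {k : ℕ} (f : ℕ → ℕ → ℕ) (x : ℕ) : emb k f x k = 0 := by
  simp [emb]
lemma emb_gt {k y : ℕ} (f : ℕ → ℕ → ℕ) (x : ℕ) (h : k < y) : emb k f x y = f x (y-1) := by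
  simp only [emb]; rw [if_neg (by omega), if_neg (by omega)]
lemma strip_lt {k y : ℕ} (f : ℕ → ℕ → ℕ) (x : ℕ) (h : y < k) : strip k f x y = f x y := by
  simp only [strip]; rw [if_pos h]
lemma strip_ge {k y : ℕ} (f : ℕ → ℕ → ℕ) (x : ℕ) (h : ¬ (y < k)) :
    strip k f x y = f x (y+1) := by
  simp only [strip]; rw [if_neg h]

lemma red_sum (m : ℕ) (M : Mat m) :
    ∑ x ∈ Finset.range m, ∑ y ∈ Finset.range m, red m (extM M) x y = reducedSize M := by
  rw [reducedSize_eq]; rfl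

lemma alpha_good (n : ℕ) : ∀ A ∈ Mset n, alphaF A ∈ SMset n ∧
    firstRowSum (alphaF A).2 = firstRowSum A.2 ∧ centerColSum (alphaF A).2 = diagSum A.2 := by
  rintro ⟨m, M⟩ hM
  obtain ⟨⟨hUT, hrow, hcol⟩, hSD, hsz⟩ := hM
  rcases Nat.even_or_odd m with he | ho
  · -- EVEN CASE
    obtain ⟨k, rfl⟩ : ∃ k, m = 2*k := ⟨m/2, by have h2 := Nat.even_iff.mp he; omega⟩
    rw [alphaF_even]
    have hUT' : ∀ {x y : ℕ}, y < x → extM M x y = 0 := fun h => ext_UT hUT h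
    have hrow' : ∀ x, x < 2*k → ∃ y, y < 2*k ∧ extM M x y ≠ 0 :=
      fun x hx => row_ext (hrow ⟨x, hx⟩)
    have hcol' : ∀ y, y < 2*k → ∃ x, x < 2*k ∧ extM M x y ≠ 0 :=
      fun y hy => col_ext (hcol ⟨y, hy⟩)
    have hSD' : ∀ x y, x < 2*k → y < 2*k → extM M x y = extM M (2*k-1-y) (2*k-1-x) :=
      fun x y hx hy => ext_SD hSD hx hy
    refine ⟨⟨?_, ?_, k, rfl, ?_, ?_⟩, ?_, ?_⟩
    · -- SuperTri
      show SuperTri (toMat (2*k+1) (gam k (emb k (red (2*k) (extM M)))))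
      apply SuperTri_toMat
      · -- UT
        intro x y hx hy hxy
        rcases eq_or_ne y k with h | hyk
        · rw [h] at hxy ⊢
          rw [gam_center]
          rcases lt_trichotomy (2*k - x) k with h2 | h2 | h2
          · rw [emb_lt _ _ h2]; exact red_neg _ (by omega)
          · rw [h2, emb_center]
          · exfalso; omega
        · rcases eq_or_ne (x+y) (2*k) with hs | hs
          · rw [gam_anti _ _ hs hyk, emb_center]
          · rw [gam_fix _ _ hyk hs]
            rcases lt_trichotomy y k with h2 | h2 | h2
            · rw [emb_lt _ _ h2]
              by_cases h3 : x + y + 1 ≤ 2*k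
              · rw [red_pos _ h3]; exact hUT' (by omega)
              · exact red_neg _ h3
            · exact absurd h2 hyk
            · rw [emb_gt _ _ h2]
              by_cases h3 : x + (y-1) + 1 ≤ 2*k
              · rw [red_pos _ h3]; exact hUT' (by omega)
              · exact red_neg _ h3
      · -- SE
        intro x y hx hy hxy
        rcases eq_or_ne y k with h | hyk
        · rw [h] at hxy ⊢
          rw [gam_center]
          rcases lt_trichotomy (2*k - x) k with h2 | h2 | h2
          · rw [emb_lt _ _ h2]; exact red_neg _ (by omega)
          · rw [h2, emb_center]
          · exfalso; omega
        · rcases eq_or_ne (x+y) (2*k) with hs | hs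
          · exfalso; omega
          · rw [gam_fix _ _ hyk hs]
            rcases lt_trichotomy y k with h2 | h2 | h2
            · rw [emb_lt _ _ h2]; exact red_neg _ (by omega)
            · exact absurd h2 hyk
            · rw [emb_gt _ _ h2]; exact red_neg _ (by omega)
    · -- msize
      show msize (toMat (2*k+1) (gam k (emb k (red (2*k) (extM M))))) = n
      rw [msize_toMat,
        Finset.sum_congr rfl (fun x hx => gam_row_sum k _ (by
          simp only [Finset.mem_range] at hx; omega)),
        Finset.sum_congr rfl (fun x _ => emb_row_sum k _ x),
        ← Finset.sum_subset (Finset.range_subset_range.mpr (show 2*k ≤ 2*k+1 by omega))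
          (fun x hx hxn => Finset.sum_eq_zero fun y hy => red_neg _ (by
            simp only [Finset.mem_range] at hx hxn hy; omega)),
        red_sum (2*k) M]
      exact hsz
    · -- condition (a)
      show ∀ j : Fin (2*k+1), (j:ℕ) < k → colNonzero (toMat (2*k+1) (gam k (emb k (red (2*k) (extM M))))) j
      intro j hj
      have hjl := j.isLt
      obtain ⟨x, hxm, hxe⟩ := hcol' j (by omega)
      have hxj : x ≤ (j:ℕ) := by by_contra hh; exact hxe (hUT' (by omega))
      refine colNonzero_of _ j (show x < 2*k+1 by omega) ?_
      rw [gam_fix _ _ (by omega) (by omega), emb_lt _ _ (by omega), red_pos _ (by omega)]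
      exact hxe
    · -- condition (b)
      show ∀ a b : Fin (2*k+1), (a:ℕ) < k → (a:ℕ) + (b:ℕ) = 2*k →
        rowNonzero (toMat (2*k+1) (gam k (emb k (red (2*k) (extM M))))) a ∨ colNonzero (toMat (2*k+1) (gam k (emb k (red (2*k) (extM M))))) b
      intro a b ha hab
      have hal := a.isLt; have hbl := b.isLt
      obtain ⟨j, hjm, hje⟩ := hrow' a (by omega)
      by_cases hc2 : (a:ℕ) + j + 1 ≤ 2*k
      · left
        rcases lt_or_ge j k with hjk | hjk
        · refine rowNonzero_of _ a (show j < 2*k+1 by omega) ?_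
          rw [gam_fix _ _ (by omega) (by omega), emb_lt _ _ hjk, red_pos _ (by omega)]
          exact hje
        · by_cases haj : (a:ℕ) + (j+1) = 2*k
          · refine rowNonzero_of _ a (show k < 2*k+1 by omega) ?_
            rw [gam_center, show 2*k - (a:ℕ) = j+1 by omega, emb_gt _ _ (by omega),
              show j+1-1 = j by omega, red_pos _ (by omega)]
            exact hje
          · refine rowNonzero_of _ a (show j+1 < 2*k+1 by omega) ?_
            rw [gam_fix _ _ (by omega) haj, emb_gt _ _ (by omega), show j+1-1 = j by omega,
              red_pos _ (by omega)]
            exact hje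
      · right
        have hd := hSD' a j (by omega) hjm
        refine colNonzero_of _ b (show 2*k-1-j < 2*k+1 by omega) ?_
        rw [gam_fix _ _ (by omega) (by omega), emb_gt _ _ (by omega),
          show (b:ℕ) - 1 = 2*k-1-(a:ℕ) by omega, red_pos _ (by omega)]
        rw [hd] at hje
        exact hje
    · -- first row sum
      show firstRowSum (toMat (2*k+1) (gam k (emb k (red (2*k) (extM M))))) = firstRowSum M
      rw [firstRowSum_toMat, gam_row_sum k _ (show (0:ℕ) ≤ 2*k by omega),
        emb_row_sum k _ 0, firstRowSum_eq M]
      refine Finset.sum_congr rfl fun y hy => ?_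
      simp only [Finset.mem_range] at hy
      exact red_pos _ (by omega)
    · -- center column sum
      show centerColSum (toMat (2*k+1) (gam k (emb k (red (2*k) (extM M))))) = diagSum M
      rw [centerColSum_toMat]
      have hL : ∀ x ∈ Finset.range (2*k+1), gam k (emb k (red (2*k) (extM M))) x k
          = (if x < k then extM M x (2*k-1-x) else 0) := by
        intro x hx
        simp only [Finset.mem_range] at hx
        rw [gam_center]
        rcases lt_trichotomy (2*k - x) k with h2 | h2 | h2
        · rw [emb_lt _ _ h2, red_neg _ (by omega), if_neg (by omega)]
        · rw [h2, emb_center, if_neg (by omega)]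
        · rw [emb_gt _ _ h2, red_pos _ (by omega), if_pos (by omega),
            show 2*k - x - 1 = 2*k-1-x by omega]
      rw [Finset.sum_congr rfl hL,
        ← Finset.sum_subset (Finset.range_subset_range.mpr (show k ≤ 2*k+1 by omega))
          (fun x hx hxn => if_neg (by simp only [Finset.mem_range] at hx hxn; omega)),
        diagSum_eq M,
        ← Finset.sum_subset (Finset.range_subset_range.mpr (show k ≤ 2*k by omega))
          (fun x hx hxn => hUT' (by simp only [Finset.mem_range] at hx hxn; omega))]
      refine Finset.sum_congr rfl fun x hx => ?_
      simp only [Finset.mem_range] at hx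
      rw [if_pos hx]
  · -- ODD CASE
    obtain ⟨k, rfl⟩ := ho
    rw [alphaF_odd]
    have hUT' : ∀ {x y : ℕ}, y < x → extM M x y = 0 := fun h => ext_UT hUT h
    have hrow' : ∀ x, x < 2*k+1 → ∃ y, y < 2*k+1 ∧ extM M x y ≠ 0 :=
      fun x hx => row_ext (hrow ⟨x, hx⟩)
    have hcol' : ∀ y, y < 2*k+1 → ∃ x, x < 2*k+1 ∧ extM M x y ≠ 0 :=
      fun y hy => col_ext (hcol ⟨y, hy⟩)
    have hSD' : ∀ x y, x < 2*k+1 → y < 2*k+1 → extM M x y = extM M (2*k-y) (2*k-x) := by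
      intro x y hx hy
      have hd := ext_SD hSD hx hy
      rwa [show 2*k+1-1-y = 2*k-y by omega, show 2*k+1-1-x = 2*k-x by omega] at hd
    refine ⟨⟨?_, ?_, k, rfl, ?_, ?_⟩, ?_, ?_⟩
    · -- SuperTri
      show SuperTri (toMat (2*k+1) (gam k (red (2*k+1) (extM M))))
      apply SuperTri_toMat
      · -- UT
        intro x y hx hy hxy
        rcases eq_or_ne y k with h | hyk
        · rw [h] at hxy ⊢
          rw [gam_center, red_pos _ (by omega)]
          exact hUT' (by omega)
        · rcases eq_or_ne (x+y) (2*k) with hs | hs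
          · rw [gam_anti _ _ hs hyk]; exact red_neg _ (by omega)
          · rw [gam_fix _ _ hyk hs]
            by_cases h3 : x + y + 1 ≤ 2*k+1
            · rw [red_pos _ h3]; exact hUT' hxy
            · exact red_neg _ h3
      · -- SE
        intro x y hx hy hxy
        rcases eq_or_ne y k with h | hyk
        · rw [h] at hxy ⊢
          rw [gam_center, red_pos _ (by omega)]
          exact hUT' (by omega)
        · rcases eq_or_ne (x+y) (2*k) with hs | hs
          · exfalso; omega
          · rw [gam_fix _ _ hyk hs]; exact red_neg _ (by omega)
    · -- msize
      show msize (toMat (2*k+1) (gam k (red (2*k+1) (extM M)))) = n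
      rw [msize_toMat,
        Finset.sum_congr rfl (fun x hx => gam_row_sum k _ (by
          simp only [Finset.mem_range] at hx; omega)),
        red_sum (2*k+1) M]
      exact hsz
    · -- condition (a)
      show ∀ j : Fin (2*k+1), (j:ℕ) < k → colNonzero (toMat (2*k+1) (gam k (red (2*k+1) (extM M)))) j
      intro j hj
      have hjl := j.isLt
      obtain ⟨x, hxm, hxe⟩ := hcol' j (by omega)
      have hxj : x ≤ (j:ℕ) := by by_contra hh; exact hxe (hUT' (by omega))
      refine colNonzero_of _ j (show x < 2*k+1 by omega) ?_
      rw [gam_fix _ _ (by omega) (by omega), red_pos _ (by omega)]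
      exact hxe
    · -- condition (b)
      show ∀ a b : Fin (2*k+1), (a:ℕ) < k → (a:ℕ) + (b:ℕ) = 2*k →
        rowNonzero (toMat (2*k+1) (gam k (red (2*k+1) (extM M)))) a ∨ colNonzero (toMat (2*k+1) (gam k (red (2*k+1) (extM M)))) b
      intro a b ha hab
      have hal := a.isLt; have hbl := b.isLt
      obtain ⟨j, hjm, hje⟩ := hrow' a (by omega)
      by_cases hc2 : (a:ℕ) + j ≤ 2*k
      · left
        rcases eq_or_ne j k with h | hjk
        · refine rowNonzero_of _ a (show 2*k - (a:ℕ) < 2*k+1 by omega) ?_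
          rw [gam_anti _ _ (by omega) (by omega), red_pos _ (by omega)]
          rw [h] at hje; exact hje
        · rcases eq_or_ne ((a:ℕ) + j) (2*k) with haj | haj
          · refine rowNonzero_of _ a (show k < 2*k+1 by omega) ?_
            rw [gam_center, red_pos _ (by omega), show 2*k - (a:ℕ) = j by omega]
            exact hje
          · refine rowNonzero_of _ a (show j < 2*k+1 by omega) ?_
            rw [gam_fix _ _ hjk haj, red_pos _ (by omega)]
            exact hje
      · right
        have hd := hSD' a j (by omega) hjm
        refine colNonzero_of _ b (show 2*k - j < 2*k+1 by omega) ?_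
        rw [gam_fix _ _ (by omega) (by omega), red_pos _ (by omega),
          show (b:ℕ) = 2*k - (a:ℕ) by omega]
        rw [hd] at hje
        exact hje
    · -- first row sum
      show firstRowSum (toMat (2*k+1) (gam k (red (2*k+1) (extM M)))) = firstRowSum M
      rw [firstRowSum_toMat, gam_row_sum k _ (show (0:ℕ) ≤ 2*k by omega), firstRowSum_eq M]
      refine Finset.sum_congr rfl fun y hy => ?_
      simp only [Finset.mem_range] at hy
      exact red_pos _ (by omega)
    · -- center column sum
      show centerColSum (toMat (2*k+1) (gam k (red (2*k+1) (extM M)))) = diagSum M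
      rw [centerColSum_toMat, diagSum_eq M]
      refine Finset.sum_congr rfl fun x hx => ?_
      simp only [Finset.mem_range] at hx
      rw [gam_center, red_pos _ (by omega), show 2*k - x = 2*k+1-1-x by omega]

end Stmt2Aux
namespace Stmt2Aux

lemma unf_pos {m x y : ℕ} (f : ℕ → ℕ → ℕ) (h : x + y + 1 ≤ m) : unf m f x y = f x y := if_pos h
lemma unf_neg {m x y : ℕ} (f : ℕ → ℕ → ℕ) (h : ¬(x + y + 1 ≤ m)) :
    unf m f x y = f (m-1-y) (m-1-x) := if_neg h

lemma beta_good (n : ℕ) : ∀ B ∈ SMset n, betaF B ∈ Mset n := by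
  rintro ⟨m', A⟩ hB
  obtain ⟨hST, hsz, k, hk, hca, hcb⟩ := hB
  have hk' : m' = 2*k+1 := hk
  subst hk'
  rw [betaF_apply k A]
  have hUT' : ∀ {x y : ℕ}, y < x → extM A x y = 0 := fun h => ext_UT hST.1 h
  have hE_UT := E_UT hST
  have hE_SE := E_SE hST
  by_cases hC : (∑ x ∈ Finset.range (2*k+1), gam k (extM A) x k) ≠ 0
  · -- ODD reconstruction
    rw [if_pos hC]
    have hF_SD : ∀ x y, x < 2*k+1 → y < 2*k+1 →
        unf (2*k+1) (gam k (extM A)) x y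
          = unf (2*k+1) (gam k (extM A)) (2*k-y) (2*k-x) := by
      intro x y hx hy
      have hd := unf_SD (2*k+1) (gam k (extM A)) hx hy
      rwa [show 2*k+1-1-y = 2*k-y by omega, show 2*k+1-1-x = 2*k-x by omega] at hd
    have hSD2 : SelfDual (toMat (2*k+1) (unf (2*k+1) (gam k (extM A)))) :=
      SelfDual_toMat (fun x y hx hy => unf_SD _ _ hx hy)
    have hcols : ∀ j : Fin (2*k+1),
        colNonzero (toMat (2*k+1) (unf (2*k+1) (gam k (extM A)))) j := by
      intro j
      have hjl := j.isLt
      rcases lt_trichotomy (j:ℕ) k with hj | hj | hj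
      · obtain ⟨x, hxm, hxe⟩ := col_ext (hca j hj)
        have hxj : x ≤ (j:ℕ) := by by_contra hh; exact hxe (hUT' (by omega))
        refine colNonzero_of _ j (show x < 2*k+1 by omega) ?_
        rw [unf_pos _ (by omega), gam_fix _ _ (by omega) (by omega)]
        exact hxe
      · obtain ⟨x, hxr, hxe⟩ := Finset.exists_ne_zero_of_sum_ne_zero hC
        simp only [Finset.mem_range] at hxr
        have hxk : x ≤ k := by by_contra hh; exact hxe (hE_UT x k (by omega))
        refine colNonzero_of _ j (show x < 2*k+1 by omega) ?_
        rw [hj, unf_pos _ (by omega)]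
        exact hxe
      · rcases hcb ⟨2*k - (j:ℕ), by omega⟩ j (by simp only [Fin.val_mk]; omega)
          (by simp only [Fin.val_mk]; omega) with hrn | hcn
        · obtain ⟨y, hym, hye⟩ := row_ext hrn
          have hye' : extM A (2*k - (j:ℕ)) y ≠ 0 := hye
          rcases eq_or_ne y k with hyk | hyk
          · refine colNonzero_of _ j (show 2*k - (j:ℕ) < 2*k+1 by omega) ?_
            rw [unf_pos _ (by omega), gam_anti _ _ (by omega) (by omega)]
            rw [hyk] at hye'; exact hye'
          · rcases eq_or_ne ((2*k - (j:ℕ)) + y) (2*k) with hay | hay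
            · refine colNonzero_of _ j (show k < 2*k+1 by omega) ?_
              rw [hF_SD k j (by omega) (by omega),
                show 2*k - k = k by omega, unf_pos _ (by omega), gam_center,
                show 2*k - (2*k - (j:ℕ)) = y by omega]
              exact hye'
            · have h1 : (2*k - (j:ℕ)) + y ≤ 2*k := by
                by_contra hh; exact hye' (ext_SE hST (by omega))
              refine colNonzero_of _ j (show 2*k - y < 2*k+1 by omega) ?_
              have h2 := hF_SD (2*k - (j:ℕ)) y (by omega) (by omega)
              rw [show 2*k - (2*k - (j:ℕ)) = (j:ℕ) by omega] at h2
              rw [← h2, unf_pos _ (by omega), gam_fix _ _ hyk hay]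
              exact hye'
        · obtain ⟨x, hxm, hxe⟩ := col_ext hcn
          have h1 : x + (j:ℕ) ≤ 2*k := by by_contra hh; exact hxe (ext_SE hST (by omega))
          rcases eq_or_ne (x + (j:ℕ)) (2*k) with hxj | hxj
          · refine colNonzero_of _ j (show k < 2*k+1 by omega) ?_
            have h2 := hF_SD k (j:ℕ) (by omega) (by omega)
            rw [show 2*k - (j:ℕ) = x by omega, show 2*k - k = k by omega] at h2
            rw [h2, unf_pos _ (by omega), gam_center, show 2*k - x = (j:ℕ) by omega]
            exact hxe
          · refine colNonzero_of _ j (show x < 2*k+1 by omega) ?_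
            rw [unf_pos _ (by omega), gam_fix _ _ (by omega) hxj]
            exact hxe
    have hUT2 : UT (toMat (2*k+1) (unf (2*k+1) (gam k (extM A)))) :=
      UT_toMat (fun x y hx hy hxy => unf_UT _ _ hE_UT hx hy hxy)
    have hrs : reducedSize (toMat (2*k+1) (unf (2*k+1) (gam k (extM A)))) = n := by
      rw [reducedSize_toMat]
      have h1 : ∀ x ∈ Finset.range (2*k+1), (∑ y ∈ Finset.range (2*k+1),
          if x + y + 1 ≤ 2*k+1 then unf (2*k+1) (gam k (extM A)) x y else 0)
          = ∑ y ∈ Finset.range (2*k+1), extM A x y := by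
        intro x hx
        simp only [Finset.mem_range] at hx
        refine (Finset.sum_congr rfl fun y hy => ?_).trans (gam_row_sum k _ (by omega))
        by_cases h : x + y + 1 ≤ 2*k+1
        · rw [if_pos h, unf_pos _ h]
        · rw [if_neg h, hE_SE x y (by omega)]
      rw [Finset.sum_congr rfl h1, ← msize_eq A]
      exact hsz
    exact ⟨⟨hUT2, fun i => rowNonzero_of_SD hSD2 (hcols i.rev), hcols⟩, hSD2, hrs⟩
  · -- EVEN reconstruction
    rw [if_neg hC]
    have hs0 : (∑ x ∈ Finset.range (2*k+1), gam k (extM A) x k) = 0 := not_ne_iff.mp hC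
    have hEc : ∀ x, gam k (extM A) x k = 0 := E_center hs0
    have hRUT := R_UT hST
    have hRSE := R_SE hST
    have hSD2 : SelfDual (toMat (2*k) (unf (2*k) (strip k (gam k (extM A))))) :=
      SelfDual_toMat (fun x y hx hy => unf_SD _ _ hx hy)
    have hcols : ∀ j : Fin (2*k),
        colNonzero (toMat (2*k) (unf (2*k) (strip k (gam k (extM A))))) j := by
      intro j
      have hjl := j.isLt
      rcases lt_or_ge (j:ℕ) k with hj | hj
      · obtain ⟨x, hxm, hxe⟩ := col_ext (hca ⟨(j:ℕ), by omega⟩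
          (by simp only [Fin.val_mk]; omega))
        have hxe' : extM A x (j:ℕ) ≠ 0 := hxe
        have hxj : x ≤ (j:ℕ) := by by_contra hh; exact hxe' (hUT' (by omega))
        refine colNonzero_of _ j (show x < 2*k by omega) ?_
        rw [unf_pos _ (by omega), strip_lt _ _ (by omega),
          gam_fix _ _ (by omega) (by omega)]
        exact hxe'
      · rcases hcb ⟨2*k-1-(j:ℕ), by omega⟩ ⟨(j:ℕ)+1, by omega⟩
          (by simp only [Fin.val_mk]; omega) (by simp only [Fin.val_mk]; omega) with hrn | hcn
        · obtain ⟨y, hym, hye⟩ := row_ext hrn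
          have hye' : extM A (2*k-1-(j:ℕ)) y ≠ 0 := hye
          rcases eq_or_ne y k with hyk | hyk
          · refine colNonzero_of _ j (show 2*k-1-(j:ℕ) < 2*k by omega) ?_
            rw [unf_pos _ (by omega), strip_ge _ _ (by omega),
              gam_anti _ _ (by omega) (by omega)]
            rw [hyk] at hye'; exact hye'
          · rcases eq_or_ne ((2*k-1-(j:ℕ)) + y) (2*k) with hay | hay
            · exfalso
              have h2 : gam k (extM A) (2*k-1-(j:ℕ)) k = extM A (2*k-1-(j:ℕ)) y := by
                rw [gam_center, show 2*k - (2*k-1-(j:ℕ)) = y by omega]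
              exact hye' (by rw [← h2]; exact hEc _)
            · have h1 : (2*k-1-(j:ℕ)) + y ≤ 2*k := by
                by_contra hh; exact hye' (ext_SE hST (by omega))
              rcases lt_or_ge y k with hylt | hygt
              · refine colNonzero_of _ j (show 2*k-1-y < 2*k by omega) ?_
                have h2 := unf_SD (2*k) (strip k (gam k (extM A)))
                  (show 2*k-1-(j:ℕ) < 2*k by omega) (show y < 2*k by omega)
                rw [show 2*k-1-(2*k-1-(j:ℕ)) = (j:ℕ) by omega] at h2
                rw [← h2, unf_pos _ (by omega), strip_lt _ _ hylt, gam_fix _ _ hyk hay]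
                exact hye'
              · refine colNonzero_of _ j (show 2*k-y < 2*k by omega) ?_
                have h2 := unf_SD (2*k) (strip k (gam k (extM A)))
                  (show 2*k-1-(j:ℕ) < 2*k by omega) (show y-1 < 2*k by omega)
                rw [show 2*k-1-(2*k-1-(j:ℕ)) = (j:ℕ) by omega,
                  show 2*k-1-(y-1) = 2*k-y by omega] at h2
                rw [← h2, unf_pos _ (by omega), strip_ge _ _ (by omega),
                  show y-1+1 = y by omega, gam_fix _ _ hyk hay]
                exact hye'
        · obtain ⟨x, hxm, hxe⟩ := col_ext hcn
          have hxe' : extM A x ((j:ℕ)+1) ≠ 0 := hxe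
          have h1 : x + ((j:ℕ)+1) ≤ 2*k := by
            by_contra hh; exact hxe' (ext_SE hST (by omega))
          rcases eq_or_ne (x + ((j:ℕ)+1)) (2*k) with hxj | hxj
          · exfalso
            have h2 : gam k (extM A) x k = extM A x ((j:ℕ)+1) := by
              rw [gam_center, show 2*k - x = (j:ℕ)+1 by omega]
            exact hxe' (by rw [← h2]; exact hEc x)
          · refine colNonzero_of _ j (show x < 2*k by omega) ?_
            rw [unf_pos _ (by omega), strip_ge _ _ (by omega),
              gam_fix _ _ (by omega) hxj]
            exact hxe'
    have hUT2 : UT (toMat (2*k) (unf (2*k) (strip k (gam k (extM A))))) :=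
      UT_toMat (fun x y hx hy hxy => unf_UT _ _ hRUT hx hy hxy)
    have hrs : reducedSize (toMat (2*k) (unf (2*k) (strip k (gam k (extM A))))) = n := by
      rw [reducedSize_toMat]
      have h1 : ∀ x ∈ Finset.range (2*k), (∑ y ∈ Finset.range (2*k),
          if x + y + 1 ≤ 2*k then unf (2*k) (strip k (gam k (extM A))) x y else 0)
          = ∑ y ∈ Finset.range (2*k+1), gam k (extM A) x y := by
        intro x hx
        refine (Finset.sum_congr rfl fun y hy => ?_).trans (strip_row_sum k _ x (hEc x))
        by_cases h : x + y + 1 ≤ 2*k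
        · rw [if_pos h, unf_pos _ h]
        · rw [if_neg h, hRSE x y (by omega)]
      rw [Finset.sum_congr rfl h1,
        Finset.sum_subset (Finset.range_subset_range.mpr (show 2*k ≤ 2*k+1 by omega))
          (fun x hx hxn => Finset.sum_eq_zero (fun y hy => by
            have hx2 : x = 2*k := by
              simp only [Finset.mem_range] at hx hxn; omega
            rw [hx2]; exact E_row2k hST hEc y)),
        Finset.sum_congr rfl (fun x hx => gam_row_sum k _ (by
          simp only [Finset.mem_range] at hx; omega)),
        ← msize_eq A]
      exact hsz
    exact ⟨⟨hUT2, fun i => rowNonzero_of_SD hSD2 (hcols i.rev), hcols⟩, hSD2, hrs⟩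

end Stmt2Aux
namespace Stmt2Aux

lemma gam_congr {k : ℕ} {f g : ℕ → ℕ → ℕ} {x y : ℕ} (hx : x ≤ 2*k) (hy : y ≤ 2*k)
    (h : ∀ x' y', x' ≤ 2*k → y' ≤ 2*k → f x' y' = g x' y') : gam k f x y = gam k g x y := by
  simp only [gam]; split_ifs <;> apply h <;> omega

lemma left_inv (n : ℕ) : ∀ A ∈ Mset n, betaF (alphaF A) = A := by
  rintro ⟨m, M⟩ hM
  obtain ⟨⟨hUT, hrow, hcol⟩, hSD, hsz⟩ := hM
  have hUT' : ∀ {x y : ℕ}, y < x → extM M x y = 0 := fun h => ext_UT hUT h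
  rcases Nat.even_or_odd m with he | ho
  · -- EVEN
    obtain ⟨k, rfl⟩ : ∃ k, m = 2*k := ⟨m/2, by have h2 := Nat.even_iff.mp he; omega⟩
    rw [alphaF_even, betaF_apply k]
    have hg : ∀ x y, x ≤ 2*k → y ≤ 2*k →
        extM (toMat (2*k+1) (gam k (emb k (red (2*k) (extM M))))) x y
          = gam k (emb k (red (2*k) (extM M))) x y := fun x y hx hy => by
      rw [extM_toMat, if_pos ⟨by omega, by omega⟩]
    have hE' : ∀ x y, x ≤ 2*k → y ≤ 2*k →
        gam k (extM (toMat (2*k+1) (gam k (emb k (red (2*k) (extM M)))))) x y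
          = emb k (red (2*k) (extM M)) x y := by
      intro x y hx hy
      rw [gam_congr hx hy hg, gam_gam _ _ hx]
    rw [if_neg (by
      push_neg
      refine Finset.sum_eq_zero fun x hx => ?_
      simp only [Finset.mem_range] at hx
      rw [hE' x k (by omega) (by omega), emb_center])]
    refine Sigma.ext rfl (heq_of_eq ?_)
    funext i j
    have hi : (i:ℕ) < 2*k := i.isLt
    have hj : (j:ℕ) < 2*k := j.isLt
    have hstrip : ∀ x y, x ≤ 2*k → y < 2*k →
        strip k (gam k (extM (toMat (2*k+1) (gam k (emb k (red (2*k) (extM M))))))) x y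
          = red (2*k) (extM M) x y := by
      intro x y hx hy
      rcases lt_or_ge y k with h | h
      · rw [strip_lt _ _ h, hE' x y hx (by omega), emb_lt _ _ h]
      · rw [strip_ge _ _ (by omega), hE' x (y+1) hx (by omega), emb_gt _ _ (by omega),
          show y+1-1 = y by omega]
    show unf (2*k)
      (strip k (gam k (extM (toMat (2*k+1) (gam k (emb k (red (2*k) (extM M)))))))) i j
        = M i j
    by_cases hc : (i:ℕ) + (j:ℕ) + 1 ≤ 2*k
    · rw [unf_pos _ hc, hstrip i j (by omega) (by omega), red_pos _ hc, extM_apply]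
    · rw [unf_neg _ hc, hstrip _ _ (by omega) (by omega), red_pos _ (by omega)]
      have hd := ext_SD hSD hi hj
      rw [← hd, extM_apply]
  · -- ODD
    obtain ⟨k, rfl⟩ := ho
    rw [alphaF_odd, betaF_apply k]
    have hg : ∀ x y, x ≤ 2*k → y ≤ 2*k →
        extM (toMat (2*k+1) (gam k (red (2*k+1) (extM M)))) x y
          = gam k (red (2*k+1) (extM M)) x y := fun x y hx hy => by
      rw [extM_toMat, if_pos ⟨by omega, by omega⟩]
    have hE' : ∀ x y, x ≤ 2*k → y ≤ 2*k →
        gam k (extM (toMat (2*k+1) (gam k (red (2*k+1) (extM M))))) x y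
          = red (2*k+1) (extM M) x y := by
      intro x y hx hy
      rw [gam_congr hx hy hg, gam_gam _ _ hx]
    obtain ⟨x0, hx0m, hx0e⟩ := col_ext (hcol ⟨k, show k < 2*k+1 by omega⟩)
    have hx0e' : extM M x0 k ≠ 0 := hx0e
    have hx0k : x0 ≤ k := by by_contra hh; exact hx0e' (hUT' (by omega))
    rw [if_pos (by
      intro h0
      refine hx0e' ?_
      have h2 := Finset.sum_eq_zero_iff.mp h0 x0 (Finset.mem_range.mpr (by omega))
      rwa [hE' x0 k (by omega) (by omega), red_pos _ (by omega)] at h2)]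
    refine Sigma.ext rfl (heq_of_eq ?_)
    funext i j
    have hi : (i:ℕ) < 2*k+1 := i.isLt
    have hj : (j:ℕ) < 2*k+1 := j.isLt
    show unf (2*k+1) (gam k (extM (toMat (2*k+1) (gam k (red (2*k+1) (extM M)))))) i j
      = M i j
    by_cases hc : (i:ℕ) + (j:ℕ) + 1 ≤ 2*k+1
    · rw [unf_pos _ hc, hE' i j (by omega) (by omega), red_pos _ hc, extM_apply]
    · rw [unf_neg _ hc, hE' _ _ (by omega) (by omega), red_pos _ (by omega)]
      have hd := ext_SD hSD hi hj
      rw [← hd, extM_apply]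

lemma right_inv (n : ℕ) : ∀ B ∈ SMset n, alphaF (betaF B) = B := by
  rintro ⟨m', A⟩ hB
  obtain ⟨hST, hsz, k, hk, hca, hcb⟩ := hB
  have hk' : m' = 2*k+1 := hk
  subst hk'
  rw [betaF_apply k A]
  have hE_SE := E_SE hST
  by_cases hC : (∑ x ∈ Finset.range (2*k+1), gam k (extM A) x k) ≠ 0
  · rw [if_pos hC, alphaF_odd k]
    refine Sigma.ext rfl (heq_of_eq ?_)
    funext i j
    have hi : (i:ℕ) < 2*k+1 := i.isLt
    have hj : (j:ℕ) < 2*k+1 := j.isLt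
    show gam k (red (2*k+1) (extM (toMat (2*k+1) (unf (2*k+1) (gam k (extM A)))))) i j
      = A i j
    have hinner : ∀ x y, x ≤ 2*k → y ≤ 2*k →
        red (2*k+1) (extM (toMat (2*k+1) (unf (2*k+1) (gam k (extM A))))) x y
          = gam k (extM A) x y := by
      intro x y hx hy
      by_cases h : x + y + 1 ≤ 2*k+1
      · rw [red_pos _ h, extM_toMat, if_pos ⟨by omega, by omega⟩, unf_pos _ h]
      · rw [red_neg _ h, hE_SE x y (by omega)]
    rw [gam_congr (show (i:ℕ) ≤ 2*k by omega) (show (j:ℕ) ≤ 2*k by omega) hinner,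
      gam_gam _ _ (by omega), extM_apply]
  · rw [if_neg hC, alphaF_even k]
    have hs0 : (∑ x ∈ Finset.range (2*k+1), gam k (extM A) x k) = 0 := not_ne_iff.mp hC
    have hEc := E_center hs0
    have hRSE := R_SE hST
    refine Sigma.ext rfl (heq_of_eq ?_)
    funext i j
    have hi : (i:ℕ) < 2*k+1 := i.isLt
    have hj : (j:ℕ) < 2*k+1 := j.isLt
    show gam k (emb k (red (2*k)
      (extM (toMat (2*k) (unf (2*k) (strip k (gam k (extM A)))))))) i j = A i j
    have hred : ∀ x y, red (2*k) (extM (toMat (2*k) (unf (2*k)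
          (strip k (gam k (extM A)))))) x y
        = strip k (gam k (extM A)) x y := by
      intro x y
      by_cases h : x + y + 1 ≤ 2*k
      · rw [red_pos _ h, extM_toMat, if_pos ⟨by omega, by omega⟩, unf_pos _ h]
      · rw [red_neg _ h, hRSE x y (by omega)]
    have hemb : ∀ x y, x ≤ 2*k → y ≤ 2*k →
        emb k (red (2*k) (extM (toMat (2*k) (unf (2*k) (strip k (gam k (extM A))))))) x y
          = gam k (extM A) x y := by
      intro x y hx hy
      rcases lt_trichotomy y k with h | h | h
      · rw [emb_lt _ _ h, hred, strip_lt _ _ h]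
      · rw [h, emb_center]; exact (hEc x).symm
      · rw [emb_gt _ _ h, hred, strip_ge _ _ (by omega), show y-1+1 = y by omega]
    rw [gam_congr (show (i:ℕ) ≤ 2*k by omega) (show (j:ℕ) ≤ 2*k by omega) hemb,
      gam_gam _ _ (by omega), extM_apply]

end Stmt2Aux

theorem stmt2' (n : ℕ) :
    ∃ α : SMat → SMat, Set.BijOn α (Mset n) (SMset n) ∧
      ∀ A ∈ Mset n, firstRowSum (α A).2 = firstRowSum A.2 ∧
        centerColSum (α A).2 = diagSum A.2 := by
  refine ⟨Stmt2Aux.alphaF,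
    Set.InvOn.bijOn (f' := Stmt2Aux.betaF) ⟨?_, ?_⟩ ?_ ?_, ?_⟩
  · exact fun A hA => Stmt2Aux.left_inv n A hA
  · exact fun B hB => Stmt2Aux.right_inv n B hB
  · exact fun A hA => (Stmt2Aux.alpha_good n A hA).1
  · exact fun B hB => Stmt2Aux.beta_good n B hB
  · exact fun A hA => (Stmt2Aux.alpha_good n A hA).2
/-- For `n ≥ 1` there is a bijection `α` between `M(n)` and `SM(n)`
preserving the sum of the first row and carrying the sum of the diagonal cells
to the sum of the center column. -/
theorem stmt2 (n : ℕ) (hn : 1 ≤ n) :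
    ∃ α : SMat → SMat, Set.BijOn α (Mset n) (SMset n) ∧
      ∀ A ∈ Mset n, firstRowSum (α A).2 = firstRowSum A.2 ∧
        centerColSum (α A).2 = diagSum A.2 := by
  exact stmt2' n
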